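/- For every real number λ and every real number x, the formal power series F(t) = Σ_{n=0}^{∞} φ_{n,λ}(x) t^n/n! over ℝ satisfies the differential equation F′(t) = x · e_λ^{1−λ}(t) · F(t), where F′ denotes the formal derivative in t and e_λ^{1−λ}(t) = Σ_{n=0}^{∞} (1−λ)_{n,λ} t^n/n!. (This is the differential equation (27)/(28) satisfied by the generating function of the degenerate Bell polynomials.) -/

import Mathlib

open Finset

/-- Generalized falling factorial `(x)_{n,λ} = x(x-λ)⋯(x-(n-1)λ)`. -/
noncomputable def dfall (lam x : ℝ) (n : ℕ) : ℝ := ∏ i ∈ Finset.range n, (x - i * lam)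

/-- Ordinary falling factorial `(x)_n = x(x-1)⋯(x-n+1)`. -/
noncomputable def ffall (x : ℝ) (n : ℕ) : ℝ := ∏ i ∈ Finset.range n, (x - i)

/-- Degenerate Stirling numbers of the second kind, defined by the recurrence
`S_{2,λ}(0,0)=1`, `S_{2,λ}(n,k)=0` for `k>n` (and `k<0`), and
`S_{2,λ}(n+1,k) = S_{2,λ}(n,k-1) + (k-nλ) S_{2,λ}(n,k)`. -/
noncomputable def dStir (lam : ℝ) : ℕ → ℕ → ℝ
  | 0, 0 => 1
  | 0, _ + 1 => 0
  | n + 1, 0 => ((0 : ℝ) - n * lam) * dStir lam n 0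
  | n + 1, k + 1 => dStir lam n k + (((k : ℝ) + 1) - n * lam) * dStir lam n (k + 1)

/-- Degenerate Bell polynomials `φ_{n,λ}(x) = Σ_{k=0}^n S_{2,λ}(n,k) x^k`. -/
noncomputable def dBell (lam x : ℝ) (n : ℕ) : ℝ :=
  ∑ k ∈ Finset.range (n + 1), dStir lam n k * x ^ k
/-- The degenerate exponential function `e_λ^y(t) = Σ_{n} (y)_{n,λ} t^n/n!`
as a formal power series over `ℝ`. -/
noncomputable def degExp (lam y : ℝ) : PowerSeries ℝ :=
  PowerSeries.mk fun n => dfall lam y n / n.factorial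

lemma dfall_succ (lam x : ℝ) (m : ℕ) :
    dfall lam x (m + 1) = dfall lam x m * (x - m * lam) := by
  simp [dfall, Finset.prod_range_succ]

lemma dStir_eq_zero_of_lt (lam : ℝ) : ∀ n k, n < k → dStir lam n k = 0 := by
  intro n
  induction n with
  | zero =>
    intro k hk
    match k, hk with
    | k + 1, _ => simp [dStir]
  | succ n ih =>
    intro k hk
    match k, hk with
    | k + 1, hk =>
      have h1 : n < k := by omega
      have h2 : n < k + 1 := by omega
      simp [dStir, ih k h1, ih (k+1) h2]

lemma dStir_succ_zero (lam : ℝ) : ∀ n, dStir lam (n + 1) 0 = 0 := by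
  intro n
  induction n with
  | zero => simp [dStir]
  | succ n ih =>
    show ((0:ℝ) - (↑(n+1) : ℝ) * lam) * dStir lam (n+1) 0 = 0
    rw [ih, mul_zero]

lemma dStir_key (lam : ℝ) : ∀ n k, dStir lam (n + 1) (k + 1)
    = ∑ j ∈ Finset.range (n + 1),
        (n.choose j : ℝ) * dfall lam (1 - lam) (n - j) * dStir lam j k := by
  intro n
  induction n with
  | zero => intro k; simp [dStir, dfall]
  | succ n ih =>
    intro k
    -- split the right side
    have hsplit : ∑ j ∈ Finset.range (n + 2),
        (((n+1).choose j : ℝ)) * dfall lam (1 - lam) (n + 1 - j) * dStir lam j k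
        = (∑ j ∈ Finset.range (n + 1),
            (n.choose j : ℝ) * dfall lam (1 - lam) (n - j) * dStir lam (j + 1) k)
          + ∑ j ∈ Finset.range (n + 2),
            (n.choose j : ℝ) * dfall lam (1 - lam) (n + 1 - j) * dStir lam j k := by
      rw [Finset.sum_range_succ' (fun j =>
        (((n+1).choose j : ℝ)) * dfall lam (1 - lam) (n + 1 - j) * dStir lam j k) (n+1)]
      rw [Finset.sum_range_succ' (fun j =>
        ((n.choose j : ℝ)) * dfall lam (1 - lam) (n + 1 - j) * dStir lam j k) (n+1)]
      simp only [Nat.succ_sub_succ, Nat.choose_succ_succ, Nat.cast_add,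
        Nat.choose_zero_right, Nat.cast_one, add_mul]
      rw [Finset.sum_add_distrib]
      ring
    have htrim : ∑ j ∈ Finset.range (n + 2),
        (n.choose j : ℝ) * dfall lam (1 - lam) (n + 1 - j) * dStir lam j k
        = ∑ j ∈ Finset.range (n + 1),
            (n.choose j : ℝ) * dfall lam (1 - lam) (n + 1 - j) * dStir lam j k := by
      rw [Finset.sum_range_succ]
      simp [Nat.choose_succ_self]
    rw [hsplit, htrim]
    match k with
    | 0 =>
      show dStir lam (n + 2) 1 = _
      have hL : dStir lam (n + 2) 1
          = dStir lam (n + 1) 0 + ((0:ℝ) + 1 - (n + 1) * lam) * dStir lam (n + 1) 1 := by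
        simp only [dStir]; push_cast; ring
      rw [hL, dStir_succ_zero, ih 0, zero_add, Finset.mul_sum]
      have hA : ∀ j ∈ Finset.range (n + 1),
          (n.choose j : ℝ) * dfall lam (1 - lam) (n - j) * dStir lam (j + 1) 0
            + (n.choose j : ℝ) * dfall lam (1 - lam) (n + 1 - j) * dStir lam j 0
          = ((0:ℝ) + 1 - (n + 1) * lam)
              * ((n.choose j : ℝ) * dfall lam (1 - lam) (n - j) * dStir lam j 0) := by
        intro j hj
        have hj' : j ≤ n := by simpa [Nat.lt_succ_iff] using hj
        have h1 : n + 1 - j = (n - j) + 1 := by omega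
        have h2 : ((n - j : ℕ) : ℝ) = (n : ℝ) - j := by
          rw [Nat.cast_sub hj']
        have h3 : dStir lam (j + 1) 0 = ((0:ℝ) - j * lam) * dStir lam j 0 := rfl
        rw [h1, dfall_succ, h3, h2]
        ring
      rw [← Finset.sum_add_distrib] at *
      rw [Finset.sum_congr rfl hA, ← Finset.mul_sum]
    | k + 1 =>
      have hL : dStir lam (n + 2) (k + 2)
          = dStir lam (n + 1) (k + 1)
            + (((k:ℝ) + 1) + 1 - (n + 1) * lam) * dStir lam (n + 1) (k + 2) := by
        simp only [dStir]; push_cast; ring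
      rw [hL, ih k, ih (k + 1), Finset.mul_sum, ← Finset.sum_add_distrib,
        ← Finset.sum_add_distrib]
      refine Finset.sum_congr rfl fun j hj => ?_
      have hj' : j ≤ n := by simpa [Nat.lt_succ_iff] using hj
      have h1 : n + 1 - j = (n - j) + 1 := by omega
      have h2 : ((n - j : ℕ) : ℝ) = (n : ℝ) - j := by rw [Nat.cast_sub hj']
      have h3 : dStir lam (j + 1) (k + 1)
          = dStir lam j k + (((k : ℝ) + 1) - j * lam) * dStir lam j (k + 1) := rfl
      rw [h1, dfall_succ, h3, h2]
      ring

lemma dBell_key (lam x : ℝ) (n : ℕ) :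
    dBell lam x (n + 1)
      = x * ∑ j ∈ Finset.range (n + 1),
          (n.choose j : ℝ) * dfall lam (1 - lam) (n - j) * dBell lam x j := by
  have hinner : ∀ j ∈ Finset.range (n + 1),
      ∑ k ∈ Finset.range (n + 1), dStir lam j k * x ^ k = dBell lam x j := by
    intro j hj
    have hj' : j + 1 ≤ n + 1 := by simpa [Nat.lt_succ_iff] using hj
    rw [dBell]
    exact (Finset.sum_subset (Finset.range_subset_range.mpr hj') (by
      intro k _ hk
      have : j < k := by simp at hk ⊢; omega
      simp [dStir_eq_zero_of_lt lam j k this])).symm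
  calc dBell lam x (n + 1)
      = ∑ k ∈ Finset.range (n + 1), dStir lam (n + 1) (k + 1) * x ^ (k + 1)
          + dStir lam (n + 1) 0 * x ^ 0 := by
        rw [dBell, Finset.sum_range_succ']
    _ = ∑ k ∈ Finset.range (n + 1), ∑ j ∈ Finset.range (n + 1),
          x * ((n.choose j : ℝ) * dfall lam (1 - lam) (n - j) * (dStir lam j k * x ^ k)) := by
        rw [dStir_succ_zero]
        simp only [zero_mul, add_zero]
        refine Finset.sum_congr rfl fun k _ => ?_
        rw [dStir_key, Finset.sum_mul]
        refine Finset.sum_congr rfl fun j _ => ?_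
        ring
    _ = x * ∑ j ∈ Finset.range (n + 1),
          (n.choose j : ℝ) * dfall lam (1 - lam) (n - j) * dBell lam x j := by
        rw [Finset.sum_comm, Finset.mul_sum]
        refine Finset.sum_congr rfl fun j hj => ?_
        rw [← hinner j hj, Finset.mul_sum, Finset.mul_sum]

/-- the generating function `F(t) = Σ_{n} φ_{n,λ}(x) t^n/n!` of the degenerate
Bell polynomials satisfies the formal differential equation `F′(t) = x · e_λ^{1−λ}(t) · F(t)`. -/
theorem dBell_generatingFunction_deriv (lam x : ℝ) :
    PowerSeries.derivative ℝ (PowerSeries.mk fun n => dBell lam x n / n.factorial)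
      = PowerSeries.C x * degExp lam (1 - lam)
          * PowerSeries.mk fun n => dBell lam x n / n.factorial := by
  ext n
  rw [PowerSeries.coeff_derivative, mul_assoc, PowerSeries.coeff_C_mul,
    PowerSeries.coeff_mul]
  rw [Finset.Nat.sum_antidiagonal_eq_sum_range_succ_mk]
  simp only [degExp, PowerSeries.coeff_mk]
  have hrefl : ∑ k ∈ Finset.range (n + 1),
      dfall lam (1 - lam) k / (k.factorial : ℝ) * (dBell lam x (n - k) / ((n - k).factorial : ℝ))
      = ∑ j ∈ Finset.range (n + 1),
      dfall lam (1 - lam) (n - j) / (((n - j).factorial : ℝ))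
        * (dBell lam x j / (j.factorial : ℝ)) := by
    rw [← Finset.sum_range_reflect]
    refine Finset.sum_congr rfl fun j hj => ?_
    have hj' : j ≤ n := by simpa [Nat.lt_succ_iff] using hj
    have hA : n + 1 - 1 - j = n - j := by omega
    have hB : n - (n - j) = j := by omega
    rw [hA, hB]
  rw [hrefl, dBell_key]
  rw [Finset.mul_sum, Finset.mul_sum]
  have key : ∀ j ∈ Finset.range (n + 1),
      x * ((n.choose j : ℝ) * dfall lam (1 - lam) (n - j) * dBell lam x j) / (n.factorial : ℝ)
      = x * (dfall lam (1 - lam) (n - j) / (((n - j).factorial : ℝ))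
          * (dBell lam x j / (j.factorial : ℝ))) := by
    intro j hj
    have hj' : j ≤ n := by simpa [Nat.lt_succ_iff] using hj
    have hfac : (n.choose j : ℝ) * j.factorial * (n - j).factorial = n.factorial := by
      exact_mod_cast congrArg (Nat.cast (R := ℝ))
        (Nat.choose_mul_factorial_mul_factorial hj')
    have h1 : (j.factorial : ℝ) ≠ 0 := Nat.cast_ne_zero.mpr j.factorial_ne_zero
    have h2 : ((n - j).factorial : ℝ) ≠ 0 := Nat.cast_ne_zero.mpr (n - j).factorial_ne_zero
    have h3 : (n.factorial : ℝ) ≠ 0 := Nat.cast_ne_zero.mpr n.factorial_ne_zero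
    field_simp
    rw [← hfac]
    ring
  rw [← Finset.sum_congr rfl key]
  have h3 : ((n + 1).factorial : ℝ) = (n + 1) * n.factorial := by
    push_cast [Nat.factorial_succ]; ring
  rw [← Finset.sum_div, h3]
  have h4 : (n.factorial : ℝ) ≠ 0 := Nat.cast_ne_zero.mpr n.factorial_ne_zero
  field_simp
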